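/- Let 𝔉 be a hereditary formation, G a finite group, and A and B subgroups of G. Then Z_𝔉(B) ∩ A ≤ Z_𝔉(B ∩ A). -/

import Mathlib

/-- A class of finite groups. -/
def GroupClass : Type 1 :=
  ∀ (G : Type) [Group G] [Finite G], Prop

instance SemidirectProduct.instFinite {N G : Type*} [Group N] [Group G] [Finite N] [Finite G]
    (φ : G →* MulAut N) : Finite (N ⋊[φ] G) :=
  Finite.of_injective (fun x => (x.left, x.right)) (by
    rintro ⟨a, b⟩ ⟨c, d⟩ h
    simpa [Prod.ext_iff, SemidirectProduct.ext_iff] using h)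

/-- The `F`-residual of a finite group `G`. -/
def GroupClass.residual (F : GroupClass) (G : Type) [Group G] [Finite G] : Subgroup G :=
  sInf {N : Subgroup G | ∃ _ : N.Normal, F (G ⧸ N)}

/-- `F` is a formation. -/
structure GroupClass.IsFormation (F : GroupClass) : Prop where
  nonempty : ∃ (G : Type) (_ : Group G) (_ : Finite G), F G
  isoClosed : ∀ (G H : Type) [Group G] [Finite G] [Group H] [Finite H],
    (G ≃* H) → F G → F H
  quot_residual_mem : ∀ (G : Type) [Group G] [Finite G] (N : Subgroup G) (_ : N.Normal),
    F.residual G ≤ N → F (G ⧸ N)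

/-- `F` is hereditary (subgroup-closed). -/
def GroupClass.Hereditary (F : GroupClass) : Prop :=
  ∀ (G : Type) [Group G] [Finite G], F G → ∀ H : Subgroup G, F H

/-- `F` is saturated. -/
def GroupClass.Saturated (F : GroupClass) : Prop :=
  ∀ (G : Type) [Group G] [Finite G], F.residual G ≤ frattini G → F G

section SectionMachinery

variable {G : Type} [Group G]

/-- conjugation by `g` preserves `S.subgroupOf R` when `R, S` are normal. -/
theorem conj_map_subgroupOf (R S : Subgroup G) [hR : R.Normal] [hS : S.Normal] (g : G) :
    (S.subgroupOf R).map ((MulAut.conjNormal g : MulAut R) : R →* R) = S.subgroupOf R := by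
  ext x
  simp only [Subgroup.mem_map, Subgroup.mem_subgroupOf]
  constructor
  · rintro ⟨y, hy, rfl⟩
    simpa [MulAut.conjNormal_apply] using hS.conj_mem _ hy g
  · intro hx
    refine ⟨(MulAut.conjNormal g).symm x, ?_, by simp⟩
    simp only [Subgroup.mem_subgroupOf, MulAut.conjNormal_symm_apply]
    simpa using hS.conj_mem _ hx g⁻¹

/-- The conjugation action of `G` on the normal section `R/S`. -/
def secAction (R S : Subgroup G) [R.Normal] [S.Normal] :
    G →* MulAut (R ⧸ S.subgroupOf R) where
  toFun g := QuotientGroup.congr (S.subgroupOf R) (S.subgroupOf R)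
      (MulAut.conjNormal g) (conj_map_subgroupOf R S g)
  map_one' := by
    ext x
    induction x using QuotientGroup.induction_on with
    | H r => simp [QuotientGroup.congr_mk]
  map_mul' g₁ g₂ := by
    ext x
    induction x using QuotientGroup.induction_on with
    | H r => simp [QuotientGroup.congr_mk, map_mul]

/-- The centraliser in `G` of the normal section `R/S`. -/
def secCentralizer (R S : Subgroup G) [R.Normal] [S.Normal] : Subgroup G :=
  (secAction R S).ker

instance secCentralizer.normal (R S : Subgroup G) [R.Normal] [S.Normal] :
    (secCentralizer R S).Normal := MonoidHom.normal_ker _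

/-- The semidirect product `[R/S](G/K)` for a normal subgroup `K ≤ C_G(R/S)`. -/
abbrev secSDP (R S K : Subgroup G) [R.Normal] [S.Normal] [K.Normal]
    (hK : K ≤ secCentralizer R S) : Type :=
  (R ⧸ S.subgroupOf R) ⋊[QuotientGroup.lift K (secAction R S) (fun _ hx => hK hx)] (G ⧸ K)

end SectionMachinery

/-- The normal section `R/S` of `G` is `F`-central in `G`. -/
def FCentralSection (F : GroupClass) {G : Type} [Group G] [Finite G]
    (R S : Subgroup G) [R.Normal] [S.Normal] : Prop :=
  ∃ (K : Subgroup G) (hK : K.Normal),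
    haveI := hK
    ∃ hle : K ≤ secCentralizer R S, F (secSDP R S K hle)

/-- `H/K` is a chief factor of `G`. -/
def IsChiefFactor {G : Type} [Group G] (H K : Subgroup G) : Prop :=
  H.Normal ∧ K.Normal ∧ K < H ∧
    ∀ L : Subgroup G, L.Normal → K ≤ L → L ≤ H → L = K ∨ L = H

/-- A normal subgroup `N` of `G` is `F`-hypercentral in `G`:
every chief factor of `G` below `N` is `F`-central in `G`. -/
def FHypercentralIn (F : GroupClass) {G : Type} [Group G] [Finite G] (N : Subgroup G) : Prop :=
  N.Normal ∧ ∀ H K : Subgroup G, ∀ hcf : IsChiefFactor H K, H ≤ N →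
    @FCentralSection F G _ _ H K hcf.1 hcf.2.1

/-- The `F`-hypercentre of `G`: the product of all `F`-hypercentral normal subgroups. -/
def FHypercentre (F : GroupClass) (G : Type) [Group G] [Finite G] : Subgroup G :=
  ⨆ (N : Subgroup G) (_ : FHypercentralIn F N), N

/-- `A` is `K`-`F`-subnormal in `G`. -/
def KFSubnormalIn (F : GroupClass) {G : Type} [Group G] [Finite G] (A : Subgroup G) : Prop :=
  ∃ (n : ℕ) (c : ℕ → Subgroup G), c 0 = A ∧ c n = ⊤ ∧
    ∀ i < n, c i ≤ c (i + 1) ∧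
      (((c i).subgroupOf (c (i + 1))).Normal ∨
        F ((c (i + 1)) ⧸ ((c i).subgroupOf (c (i + 1))).normalCore))


section Aux
open scoped Classical

-- quotient closure
theorem quot_mem (F : GroupClass) (hF : F.IsFormation) (G : Type) [Group G] [Finite G]
    (hG : F G) (N : Subgroup G) (hN : N.Normal) : F (G ⧸ N) := by
  apply hF.quot_residual_mem G N hN
  have hbot : (⊥ : Subgroup G) ∈ {N : Subgroup G | ∃ _ : N.Normal, F (G ⧸ N)} :=
    ⟨inferInstance, hF.isoClosed G _ (QuotientGroup.quotientBot (G := G)).symm hG⟩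
  exact le_trans (sInf_le hbot) bot_le

-- the transfer engine
theorem F_transfer (F : GroupClass) (hF : F.IsFormation) (hHer : F.Hereditary)
    {S T X : Type} [Group S] [Finite S] [Group T] [Finite T] [Group X] [Finite X]
    (hS : F S) (Phi : X →* S) (Psi : X →* T) (hPsi : Function.Surjective Psi)
    (hker : Phi.ker ≤ Psi.ker) : F T := by
  have h1 : F Phi.range := hHer S hS Phi.range
  have h2 : F (X ⧸ Phi.ker) :=
    hF.isoClosed _ _ (QuotientGroup.quotientKerEquivRange Phi).symm h1
  let q : (X ⧸ Phi.ker) →* (X ⧸ Psi.ker) := QuotientGroup.map Phi.ker Psi.ker (MonoidHom.id X) hker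
  have hq : Function.Surjective q := by
    intro y
    obtain ⟨x, rfl⟩ := QuotientGroup.mk'_surjective Psi.ker y
    exact ⟨QuotientGroup.mk x, rfl⟩
  have h3 : F ((X ⧸ Phi.ker) ⧸ q.ker) := quot_mem F hF _ h2 q.ker inferInstance
  have h4 : F (X ⧸ Psi.ker) :=
    hF.isoClosed _ _ (QuotientGroup.quotientKerEquivOfSurjective q hq) h3
  exact hF.isoClosed _ _ (QuotientGroup.quotientKerEquivOfSurjective Psi hPsi) h4

-- semidirect product hom from compatible component homs
def sdpHom {W P W' P' : Type} [Group W] [Group P] [Group W'] [Group P']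
    (α : P →* MulAut W) (β : P' →* MulAut W') (fW : W →* W') (fP : P →* P')
    (h : ∀ p w, fW (α p w) = β (fP p) (fW w)) : (W ⋊[α] P) →* (W' ⋊[β] P') where
  toFun x := ⟨fW x.left, fP x.right⟩
  map_one' := by ext <;> simp
  map_mul' x y := by
    ext <;> simp [SemidirectProduct.mul_left, SemidirectProduct.mul_right, h]

theorem sdpHom_surjective {W P W' P' : Type} [Group W] [Group P] [Group W'] [Group P']
    (α : P →* MulAut W) (β : P' →* MulAut W') (fW : W →* W') (fP : P →* P')
    (h : ∀ p w, fW (α p w) = β (fP p) (fW w)) (hW : Function.Surjective fW)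
    (hP : Function.Surjective fP) : Function.Surjective (sdpHom α β fW fP h) := by
  intro ⟨w', p'⟩
  obtain ⟨w, rfl⟩ := hW w'
  obtain ⟨p, rfl⟩ := hP p'
  exact ⟨⟨w, p⟩, rfl⟩

theorem sdpHom_mem_ker {W P W' P' : Type} [Group W] [Group P] [Group W'] [Group P']
    (α : P →* MulAut W) (β : P' →* MulAut W') (fW : W →* W') (fP : P →* P')
    (h : ∀ p w, fW (α p w) = β (fP p) (fW w)) (x : W ⋊[α] P) :
    x ∈ (sdpHom α β fW fP h).ker ↔ fW x.left = 1 ∧ fP x.right = 1 := by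
  constructor
  · intro hx
    have h1 : (sdpHom α β fW fP h x).left = (1 : W' ⋊[β] P').left := by rw [hx]
    have h2 : (sdpHom α β fW fP h x).right = (1 : W' ⋊[β] P').right := by rw [hx]
    exact ⟨h1, h2⟩
  · intro ⟨h1, h2⟩
    have hx : sdpHom α β fW fP h x = ⟨1, 1⟩ := by
      show (⟨fW x.left, fP x.right⟩ : W' ⋊[β] P') = ⟨1, 1⟩
      rw [h1, h2]
    simpa [MonoidHom.mem_ker] using hx

variable {G : Type} [Group G]

theorem secAction_mk (R S : Subgroup G) [R.Normal] [S.Normal] (g : G) (r : R) :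
    secAction R S g (QuotientGroup.mk r) = QuotientGroup.mk (MulAut.conjNormal g r) := by
  simp [secAction, QuotientGroup.congr_mk]

theorem mem_secCentralizer_iff {R S : Subgroup G} [R.Normal] [S.Normal] {g : G} :
    g ∈ secCentralizer R S ↔ ∀ r ∈ R, g * r * g⁻¹ * r⁻¹ ∈ S := by
  constructor
  · intro h r hr
    have h1 : secAction R S g = 1 := h
    have h2 : secAction R S g (QuotientGroup.mk ⟨r⁻¹, R.inv_mem hr⟩) =
        QuotientGroup.mk ⟨r⁻¹, R.inv_mem hr⟩ := by rw [h1]; rfl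
    rw [secAction_mk] at h2
    have h3 := (QuotientGroup.eq (s := (S.subgroupOf R)) ..).mp h2
    have h4 : ((MulAut.conjNormal g ⟨r⁻¹, R.inv_mem hr⟩ : R) : G)⁻¹ * r⁻¹ ∈ S := by
      simpa [Subgroup.mem_subgroupOf] using h3
    have h5 : (g * r⁻¹ * g⁻¹)⁻¹ * r⁻¹ ∈ S := by simpa using h4
    have h6 : g * r * g⁻¹ * r⁻¹ ∈ S := by
      have : (g * r⁻¹ * g⁻¹)⁻¹ * r⁻¹ = g * r * g⁻¹ * r⁻¹ := by group
      rwa [this] at h5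
    exact h6
  · intro h
    show secAction R S g = 1
    ext x
    induction x using QuotientGroup.induction_on with
    | H r =>
      rw [secAction_mk]
      show _ = QuotientGroup.mk r
      rw [QuotientGroup.eq]
      have h1 : g * (r : G)⁻¹ * g⁻¹ * ((r : G)⁻¹)⁻¹ ∈ S := h _ (R.inv_mem r.2)
      have h2 : ((MulAut.conjNormal g r : R) : G)⁻¹ * r = g * (r : G)⁻¹ * g⁻¹ * ((r : G)⁻¹)⁻¹ := by
        simp; group
      simp only [Subgroup.mem_subgroupOf]
      rw [h2.symm] at h1
      simpa using h1

/-- The canonical homomorphism `R ⋊ G → [R/S](G/K)`. -/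
def toSecSDP (R S K : Subgroup G) [R.Normal] [S.Normal] [K.Normal]
    (hle : K ≤ secCentralizer R S) :
    (↥R ⋊[MulAut.conjNormal] G) →* secSDP R S K hle :=
  sdpHom _ _ (QuotientGroup.mk' (S.subgroupOf R)) (QuotientGroup.mk' K)
    (fun p w => by
      show QuotientGroup.mk _ = QuotientGroup.lift K (secAction R S) _ (QuotientGroup.mk p) _
      change _ = secAction R S p _
      exact (secAction_mk R S p w).symm)

theorem fCentral_intro (F : GroupClass) [Finite G] (R S : Subgroup G) [R.Normal] [S.Normal]
    (h : F (secSDP R S (secCentralizer R S) le_rfl)) : FCentralSection F R S :=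
  ⟨secCentralizer R S, inferInstance, le_rfl, h⟩

instance sdp_subsingleton {W P : Type} [Group W] [Group P] [Subsingleton W] [Subsingleton P]
    (α : P →* MulAut W) : Subsingleton (W ⋊[α] P) :=
  ⟨fun a b => by ext <;> exact Subsingleton.elim _ _⟩

theorem F_of_subsingleton (F : GroupClass) (hF : F.IsFormation) (hHer : F.Hereditary)
    (T : Type) [Group T] [Finite T] [Subsingleton T] : F T := by
  obtain ⟨G₀, hg, hfin, hG₀⟩ := hF.nonempty
  exact F_transfer F hF hHer hG₀ (MonoidHom.id G₀) 1
    (fun t => ⟨1, Subsingleton.elim _ _⟩) (by simp)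

end Aux
section Aux2
open scoped Pointwise
variable {G : Type} [Group G]

theorem toSecSDP_surjective (R S K : Subgroup G) [R.Normal] [S.Normal] [K.Normal]
    (hle : K ≤ secCentralizer R S) : Function.Surjective (toSecSDP R S K hle) :=
  sdpHom_surjective _ _ _ _ _ (QuotientGroup.mk'_surjective _) (QuotientGroup.mk'_surjective _)

theorem toSecSDP_mem_ker (R S K : Subgroup G) [R.Normal] [S.Normal] [K.Normal]
    (hle : K ≤ secCentralizer R S) (x : ↥R ⋊[MulAut.conjNormal] G) :
    x ∈ (toSecSDP R S K hle).ker ↔ (x.left : G) ∈ S ∧ x.right ∈ K := by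
  rw [toSecSDP, sdpHom_mem_ker]
  constructor
  · rintro ⟨h1, h2⟩
    refine ⟨?_, ?_⟩
    · have := (QuotientGroup.eq_one_iff x.left).mp h1
      simpa [Subgroup.mem_subgroupOf] using this
    · exact (QuotientGroup.eq_one_iff x.right).mp h2
  · rintro ⟨h1, h2⟩
    exact ⟨(QuotientGroup.eq_one_iff _).mpr (Subgroup.mem_subgroupOf.mpr h1),
      (QuotientGroup.eq_one_iff _).mpr h2⟩

theorem fCentral_of_le (F : GroupClass) (hF : F.IsFormation) (hHer : F.Hereditary)
    [Finite G] (R S : Subgroup G) [hR : R.Normal] [hS : S.Normal] (h : R ≤ S) :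
    FCentralSection F R S := by
  have hC : secCentralizer R S = ⊤ := by
    rw [eq_top_iff]
    intro g _
    rw [mem_secCentralizer_iff]
    intro r hr
    exact S.mul_mem (h (hR.conj_mem r hr g)) (S.inv_mem (h hr))
  haveI h1 : Subsingleton (↥R ⧸ S.subgroupOf R) := by
    constructor
    intro a b
    induction a using QuotientGroup.induction_on with
    | H a =>
      induction b using QuotientGroup.induction_on with
      | H b =>
        rw [QuotientGroup.eq]
        exact Subgroup.mem_subgroupOf.mpr (h (R.mul_mem (R.inv_mem a.2) b.2))
  haveI h2 : Subsingleton (G ⧸ secCentralizer R S) := by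
    constructor
    intro a b
    induction a using QuotientGroup.induction_on with
    | H a =>
      induction b using QuotientGroup.induction_on with
      | H b =>
        rw [QuotientGroup.eq]
        simp [hC]
  exact fCentral_intro F R S (F_of_subsingleton F hF hHer _)

/-- Transfer: from `L/(V ⊓ L)` to `U/V` when `U = V ⊔ L` (same ambient group). -/
theorem fCentral_transfer_sup (F : GroupClass) (hF : F.IsFormation) (hHer : F.Hereditary)
    [Finite G] (U V L : Subgroup G) [hU : U.Normal] [hV : V.Normal] [hL : L.Normal]
    (hLU : L ≤ U) (hUVL : U ≤ V ⊔ L)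
    (h : FCentralSection F L (V ⊓ L)) : FCentralSection F U V := by
  obtain ⟨K, hK, hle, hmem⟩ := h
  haveI := hK
  apply fCentral_intro
  refine F_transfer F hF hHer hmem (toSecSDP L (V ⊓ L) K hle)
    (sdpHom _ _ ((QuotientGroup.mk' (V.subgroupOf U)).comp (Subgroup.inclusion hLU))
      (QuotientGroup.mk' (secCentralizer U V)) ?_) ?_ ?_
  case _ =>
    intro p w
    show QuotientGroup.mk _ =
      QuotientGroup.lift _ (secAction U V) _ (QuotientGroup.mk p) (QuotientGroup.mk _)
    change _ = secAction U V p _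
    rw [secAction_mk]
    have : Subgroup.inclusion hLU (MulAut.conjNormal p w) =
        MulAut.conjNormal p (Subgroup.inclusion hLU w) := by
      ext; simp [Subgroup.inclusion]
    rw [this]
  case _ =>
    apply sdpHom_surjective
    · -- surjectivity of mk' ∘ inclusion
      intro x
      obtain ⟨u, rfl⟩ := QuotientGroup.mk'_surjective (V.subgroupOf U) x
      have hu : (u : G) ∈ (V : Set G) * (L : Set G) := by
        rw [← Subgroup.mul_normal]
        exact hUVL u.2
      obtain ⟨v, hv, l, hl, hvl⟩ := hu
      refine ⟨⟨l, hl⟩, ?_⟩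
      show QuotientGroup.mk _ = QuotientGroup.mk u
      rw [QuotientGroup.eq]
      rw [Subgroup.mem_subgroupOf]
      show ((Subgroup.inclusion hLU ⟨l, hl⟩ : ↥U) : G)⁻¹ * u ∈ V
      have : ((Subgroup.inclusion hLU ⟨l, hl⟩ : ↥U) : G) = l := rfl
      rw [this, ← hvl]
      have : l⁻¹ * (v * l) = l⁻¹ * v * l := by group
      rw [this]
      exact hV.conj_mem' v hv l
    · exact QuotientGroup.mk'_surjective _
  case _ =>
    intro x hx
    rw [toSecSDP_mem_ker] at hx
    obtain ⟨hx1, hx2⟩ := hx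
    rw [sdpHom_mem_ker]
    constructor
    · rw [MonoidHom.comp_apply, ← MonoidHom.mem_ker, QuotientGroup.ker_mk']
      exact Subgroup.mem_subgroupOf.mpr hx1.1
    · rw [← MonoidHom.mem_ker, QuotientGroup.ker_mk']
      rw [mem_secCentralizer_iff]
      intro u hu
      set g := x.right with hg
      have hgC : g ∈ secCentralizer L (V ⊓ L) := hle hx2
      have hu' : u ∈ (V : Set G) * (L : Set G) := by
        rw [← Subgroup.mul_normal]; exact hUVL hu
      obtain ⟨v, hv, l, hl, rfl⟩ := hu'
      have hc : g * l * g⁻¹ * l⁻¹ ∈ V ⊓ L := mem_secCentralizer_iff.mp hgC l hl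
      have key : g * (v * l) * g⁻¹ * (v * l)⁻¹ =
          (g * v * g⁻¹) * (g * l * g⁻¹ * l⁻¹) * v⁻¹ := by group
      rw [key]
      exact V.mul_mem (V.mul_mem (hV.conj_mem v hv g) hc.1) (V.inv_mem hv)

end Aux2
section Aux3
open scoped Pointwise
variable {G : Type} [Group G]

/-- Transfer upward: from `R/S` to `R'/S'` when `R ≤ R'`, `S ≤ S'`, `R' ≤ R ⊔ S'`. -/
theorem fCentral_transfer_zigzag (F : GroupClass) (hF : F.IsFormation) (hHer : F.Hereditary)
    [Finite G] (R S R' S' : Subgroup G)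
    [hR : R.Normal] [hS : S.Normal] [hR' : R'.Normal] [hS' : S'.Normal]
    (hRR' : R ≤ R') (hSS' : S ≤ S') (hup : R' ≤ R ⊔ S')
    (h : FCentralSection F R S) : FCentralSection F R' S' := by
  obtain ⟨K, hK, hle, hmem⟩ := h
  haveI := hK
  apply fCentral_intro
  refine F_transfer F hF hHer hmem (toSecSDP R S K hle)
    (sdpHom _ _ ((QuotientGroup.mk' (S'.subgroupOf R')).comp (Subgroup.inclusion hRR'))
      (QuotientGroup.mk' (secCentralizer R' S')) ?_) ?_ ?_
  case _ =>
    intro p w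
    show QuotientGroup.mk _ =
      QuotientGroup.lift _ (secAction R' S') _ (QuotientGroup.mk p) (QuotientGroup.mk _)
    change _ = secAction R' S' p _
    rw [secAction_mk]
    have : Subgroup.inclusion hRR' (MulAut.conjNormal p w) =
        MulAut.conjNormal p (Subgroup.inclusion hRR' w) := by
      ext; simp [Subgroup.inclusion]
    rw [this]
  case _ =>
    apply sdpHom_surjective
    · intro x
      obtain ⟨u, rfl⟩ := QuotientGroup.mk'_surjective (S'.subgroupOf R') x
      have hu : (u : G) ∈ (R : Set G) * (S' : Set G) := by
        rw [← Subgroup.mul_normal]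
        exact hup u.2
      obtain ⟨r, hr, s, hs, hrs⟩ := hu
      refine ⟨⟨r, hr⟩, ?_⟩
      show QuotientGroup.mk _ = QuotientGroup.mk u
      rw [QuotientGroup.eq, Subgroup.mem_subgroupOf]
      show ((Subgroup.inclusion hRR' ⟨r, hr⟩ : ↥R') : G)⁻¹ * u ∈ S'
      have hc : ((Subgroup.inclusion hRR' ⟨r, hr⟩ : ↥R') : G) = r := rfl
      rw [hc, ← hrs]
      have : r⁻¹ * (r * s) = s := by group
      rw [this]
      exact hs
    · exact QuotientGroup.mk'_surjective _
  case _ =>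
    intro x hx
    rw [toSecSDP_mem_ker] at hx
    obtain ⟨hx1, hx2⟩ := hx
    rw [sdpHom_mem_ker]
    constructor
    · rw [MonoidHom.comp_apply, ← MonoidHom.mem_ker, QuotientGroup.ker_mk']
      exact Subgroup.mem_subgroupOf.mpr (hSS' hx1)
    · rw [← MonoidHom.mem_ker, QuotientGroup.ker_mk']
      rw [mem_secCentralizer_iff]
      intro u hu
      set g := x.right with hg
      have hgC : g ∈ secCentralizer R S := hle hx2
      have hu' : u ∈ (R : Set G) * (S' : Set G) := by
        rw [← Subgroup.mul_normal]; exact hup hu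
      obtain ⟨r, hr, s, hs, rfl⟩ := hu'
      have hc : g * r * g⁻¹ * r⁻¹ ∈ S := mem_secCentralizer_iff.mp hgC r hr
      have key : g * (r * s) * g⁻¹ * (r * s)⁻¹ =
          (g * r * g⁻¹ * r⁻¹) * (r * ((g * s * g⁻¹) * s⁻¹) * r⁻¹) := by group
      rw [key]
      exact S'.mul_mem (hSS' hc)
        (hS'.conj_mem _ (S'.mul_mem (hS'.conj_mem s hs g) (S'.inv_mem hs)) r)

/-- Transfer downward: from `R/S` to `R'/S'` when `R' ≤ R` and `R' ⊓ S ≤ S'`. -/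
theorem fCentral_transfer_down (F : GroupClass) (hF : F.IsFormation) (hHer : F.Hereditary)
    [Finite G] (R S R' S' : Subgroup G)
    [hR : R.Normal] [hS : S.Normal] [hR' : R'.Normal] [hS' : S'.Normal]
    (hR'R : R' ≤ R) (hdown : R' ⊓ S ≤ S')
    (h : FCentralSection F R S) : FCentralSection F R' S' := by
  obtain ⟨K, hK, hle, hmem⟩ := h
  haveI := hK
  apply fCentral_intro
  -- X = ↥R' ⋊ G, Φ into [R/S](G/K), Ψ = canonical onto [R'/S'](G/C)
  refine F_transfer F hF hHer hmem
    (sdpHom MulAut.conjNormal _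
      ((QuotientGroup.mk' (S.subgroupOf R)).comp (Subgroup.inclusion hR'R))
      (QuotientGroup.mk' K) ?_)
    (toSecSDP R' S' (secCentralizer R' S') le_rfl)
    (toSecSDP_surjective _ _ _ _) ?_
  case _ =>
    intro p w
    show QuotientGroup.mk _ =
      QuotientGroup.lift _ (secAction R S) _ (QuotientGroup.mk p) (QuotientGroup.mk _)
    change _ = secAction R S p _
    rw [secAction_mk]
    have : Subgroup.inclusion hR'R (MulAut.conjNormal p w) =
        MulAut.conjNormal p (Subgroup.inclusion hR'R w) := by
      ext; simp [Subgroup.inclusion]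
    rw [this]
  case _ =>
    intro x hx
    rw [sdpHom_mem_ker] at hx
    obtain ⟨hx1, hx2⟩ := hx
    rw [toSecSDP_mem_ker]
    constructor
    · have h1 : Subgroup.inclusion hR'R x.left ∈ S.subgroupOf R := by
        rw [← QuotientGroup.ker_mk' (S.subgroupOf R), MonoidHom.mem_ker]
        exact hx1
      have h2 : (x.left : G) ∈ S := Subgroup.mem_subgroupOf.mp h1
      exact hdown ⟨x.left.2, h2⟩
    · have hxK : x.right ∈ K := by
        rw [← QuotientGroup.ker_mk' K, MonoidHom.mem_ker]; exact hx2
      rw [mem_secCentralizer_iff]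
      intro u hu
      set g := x.right
      have hgC : g ∈ secCentralizer R S := hle hxK
      have h3 : g * u * g⁻¹ * u⁻¹ ∈ S := mem_secCentralizer_iff.mp hgC u (hR'R hu)
      have h4 : g * u * g⁻¹ * u⁻¹ ∈ R' :=
        R'.mul_mem (hR'.conj_mem u hu g) (R'.inv_mem hu)
      exact hdown ⟨h4, h3⟩

end Aux3
section Aux4
variable {G : Type} [Group G]

/-- Transfer to a subgroup: from an `F`-central section `Z/M` of `G` to a normal
section `U/V` of a subgroup `H` with `U ≤ Z ⊓ H` and `U ⊓ M ≤ V`. -/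
theorem fCentral_transfer_sub (F : GroupClass) (hF : F.IsFormation) (hHer : F.Hereditary)
    [Finite G] (H : Subgroup G) (Z M : Subgroup G) [hZ : Z.Normal] [hM : M.Normal]
    (U V : Subgroup ↥H) [hU : U.Normal] [hV : V.Normal]
    (hUZ : ∀ u : ↥U, ((u : ↥H) : G) ∈ Z)
    (hUMV : ∀ u : ↥H, u ∈ U → (u : G) ∈ M → u ∈ V)
    (h : FCentralSection F Z M) : FCentralSection F U V := by
  obtain ⟨K, hK, hle, hmem⟩ := h
  haveI := hK
  apply fCentral_intro
  let j : ↥U →* ↥Z :=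
    { toFun := fun u => ⟨((u : ↥H) : G), hUZ u⟩
      map_one' := rfl
      map_mul' := fun a b => rfl }
  refine F_transfer F hF hHer hmem
    (sdpHom MulAut.conjNormal _
      ((QuotientGroup.mk' (M.subgroupOf Z)).comp j)
      ((QuotientGroup.mk' K).comp H.subtype) ?_)
    (toSecSDP U V (secCentralizer U V) le_rfl)
    (toSecSDP_surjective _ _ _ _) ?_
  case _ =>
    intro p w
    show QuotientGroup.mk _ =
      QuotientGroup.lift _ (secAction Z M) _ (QuotientGroup.mk ((p : G))) (QuotientGroup.mk _)
    change _ = secAction Z M (p : G) _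
    rw [secAction_mk]
    have : j (MulAut.conjNormal p w) = MulAut.conjNormal (p : G) (j w) := by
      ext
      show (((MulAut.conjNormal p w : ↥U) : ↥H) : G) = (p : G) * ((w : ↥H) : G) * (p : G)⁻¹
      simp
    rw [this]
  case _ =>
    intro x hx
    rw [sdpHom_mem_ker] at hx
    obtain ⟨hx1, hx2⟩ := hx
    rw [toSecSDP_mem_ker]
    have hxM : ((x.left : ↥H) : G) ∈ M := by
      have h1 : j x.left ∈ M.subgroupOf Z := by
        rw [← QuotientGroup.ker_mk' (M.subgroupOf Z), MonoidHom.mem_ker]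
        exact hx1
      exact Subgroup.mem_subgroupOf.mp h1
    have hxK : ((x.right : ↥H) : G) ∈ K := by
      rw [← QuotientGroup.ker_mk' K, MonoidHom.mem_ker]; exact hx2
    constructor
    · exact hUMV (x.left : ↥H) x.left.2 hxM
    · rw [mem_secCentralizer_iff]
      intro u hu
      set g := x.right
      have hy : g * u * g⁻¹ * u⁻¹ ∈ U :=
        U.mul_mem (hU.conj_mem u hu g) (U.inv_mem hu)
      apply hUMV _ hy
      have hZu : (u : G) ∈ Z := hUZ ⟨u, hu⟩
      have := mem_secCentralizer_iff.mp (hle hxK) (u : G) hZu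
      simpa using this
  
end Aux4
section Aux5
variable {G₁ G₂ : Type} [Group G₁] [Group G₂]

/-- Transfer along a group isomorphism. -/
theorem fCentral_transfer_equiv (F : GroupClass) (hF : F.IsFormation) (hHer : F.Hereditary)
    [Finite G₁] [Finite G₂] (e : G₁ ≃* G₂) (U V : Subgroup G₂) [hU : U.Normal] [hV : V.Normal]
    (h : @FCentralSection F G₁ _ _ (U.comap e.toMonoidHom) (V.comap e.toMonoidHom)
      (hU.comap e.toMonoidHom) (hV.comap e.toMonoidHom)) :
    FCentralSection F U V := by
  haveI := hU.comap e.toMonoidHom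
  haveI := hV.comap e.toMonoidHom
  obtain ⟨K, hK, hle, hmem⟩ := h
  haveI := hK
  apply fCentral_intro
  let j : ↥(U.comap e.toMonoidHom) →* ↥U :=
    { toFun := fun u => ⟨e u, u.2⟩
      map_one' := by ext; simp
      map_mul' := fun a b => by ext; exact map_mul e (a : G₁) b }
  refine F_transfer F hF hHer hmem
    (toSecSDP (U.comap e.toMonoidHom) (V.comap e.toMonoidHom) K hle)
    (sdpHom MulAut.conjNormal _
      ((QuotientGroup.mk' (V.subgroupOf U)).comp j)
      ((QuotientGroup.mk' (secCentralizer U V)).comp e.toMonoidHom) ?_) ?_ ?_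
  case _ =>
    intro p w
    show QuotientGroup.mk _ =
      QuotientGroup.lift _ (secAction U V) _ (QuotientGroup.mk (e p)) (QuotientGroup.mk _)
    change _ = secAction U V (e p) _
    rw [secAction_mk]
    have : j (MulAut.conjNormal p w) = MulAut.conjNormal (e p) (j w) := by
      ext
      show e ((MulAut.conjNormal p w : _) : G₁) = e p * e ((w : _) : G₁) * (e p)⁻¹
      change e (p * (w : G₁) * p⁻¹) = _
      simp
    rw [this]
  case _ =>
    apply sdpHom_surjective
    · intro x
      obtain ⟨u, rfl⟩ := QuotientGroup.mk'_surjective (V.subgroupOf U) x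
      refine ⟨⟨e.symm u, by simp [Subgroup.mem_comap, u.2]⟩, ?_⟩
      have : j ⟨e.symm u, by simp [Subgroup.mem_comap, u.2]⟩ = u :=
        Subtype.ext (e.apply_symm_apply (u : G₂))
      show QuotientGroup.mk _ = QuotientGroup.mk u
      rw [this]
    · intro y
      obtain ⟨g, rfl⟩ := QuotientGroup.mk'_surjective (secCentralizer U V) y
      exact ⟨e.symm g, by simp⟩
  case _ =>
    intro x hx
    rw [toSecSDP_mem_ker] at hx
    obtain ⟨hx1, hx2⟩ := hx
    rw [sdpHom_mem_ker]
    constructor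
    · rw [MonoidHom.comp_apply, ← MonoidHom.mem_ker, QuotientGroup.ker_mk']
      exact Subgroup.mem_subgroupOf.mpr hx1
    · rw [MonoidHom.comp_apply, ← MonoidHom.mem_ker, QuotientGroup.ker_mk']
      rw [mem_secCentralizer_iff]
      intro u hu
      set g := x.right
      have hy : e.symm u ∈ U.comap e.toMonoidHom := by
        simp [Subgroup.mem_comap, hu]
      have h1 : g * e.symm u * g⁻¹ * (e.symm u)⁻¹ ∈ V.comap e.toMonoidHom :=
        mem_secCentralizer_iff.mp (hle hx2) (e.symm u) hy
      have h2 : e (g * e.symm u * g⁻¹ * (e.symm u)⁻¹) ∈ V := h1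
      simpa [map_mul, map_inv] using h2

/-- `IsChiefFactor` pulls back along an isomorphism. -/
theorem isChiefFactor_comap_equiv (e : G₁ ≃* G₂) (U V : Subgroup G₂)
    (h : IsChiefFactor U V) :
    IsChiefFactor (U.comap e.toMonoidHom) (V.comap e.toMonoidHom) := by
  obtain ⟨hU, hV, hlt, hmax⟩ := h
  have comap_map : ∀ L : Subgroup G₁, (L.map e.toMonoidHom).comap e.toMonoidHom = L :=
    fun L => Subgroup.comap_map_eq_self_of_injective e.injective L
  have map_comap : ∀ L : Subgroup G₂, (L.comap e.toMonoidHom).map e.toMonoidHom = L :=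
    fun L => Subgroup.map_comap_eq_self_of_surjective e.surjective L
  refine ⟨hU.comap _, hV.comap _, ?_, ?_⟩
  · constructor
    · exact Subgroup.comap_mono hlt.le
    · intro hc
      have := Subgroup.map_mono (f := e.toMonoidHom) hc
      rw [map_comap, map_comap] at this
      exact absurd (le_antisymm this hlt.le).symm hlt.ne
  · intro L hL hVL hLU
    have hLm : (L.map e.toMonoidHom).Normal := hL.map e.toMonoidHom e.surjective
    have h1 : V ≤ L.map e.toMonoidHom := by
      have := Subgroup.map_mono (f := e.toMonoidHom) hVL
      rwa [map_comap] at this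
    have h2 : L.map e.toMonoidHom ≤ U := by
      have := Subgroup.map_mono (f := e.toMonoidHom) hLU
      rwa [map_comap] at this
    rcases hmax _ hLm h1 h2 with h | h
    · left; rw [← comap_map L, h]
    · right; rw [← comap_map L, h]

/-- `FHypercentralIn` pushes forward along a group isomorphism. -/
theorem fHypercentralIn_map_equiv (F : GroupClass) (hF : F.IsFormation) (hHer : F.Hereditary)
    [Finite G₁] [Finite G₂] (e : G₁ ≃* G₂) (N : Subgroup G₁)
    (h : FHypercentralIn F N) : FHypercentralIn F (N.map e.toMonoidHom) := by
  obtain ⟨hN, hch⟩ := h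
  constructor
  · exact hN.map e.toMonoidHom e.surjective
  · intro U V hcf hle
    haveI := hcf.1
    haveI := hcf.2.1
    have hcf' := isChiefFactor_comap_equiv e U V hcf
    have hle' : U.comap e.toMonoidHom ≤ N := by
      intro x hx
      have : e x ∈ N.map e.toMonoidHom := hle hx
      obtain ⟨n, hn, hnx⟩ := this
      have : n = x := e.injective hnx
      rwa [← this]
    have := hch _ _ hcf' hle'
    exact fCentral_transfer_equiv F hF hHer e U V this

end Aux5
section Aux6
variable {G : Type} [Group G] [Finite G]

theorem subgroup_card_lt_of_lt {H K : Subgroup G} (h : H < K) : Nat.card H < Nat.card K := by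
  have h1 : (H : Set G) ⊂ (K : Set G) := SetLike.coe_ssubset_coe.mpr h
  have := Set.ncard_lt_ncard h1 (Set.toFinite _)
  rwa [← Nat.card_coe_set_eq, ← Nat.card_coe_set_eq] at this

theorem exists_maximal_normal_lt (Z : Subgroup G) (hZ : Z ≠ ⊥) (hZn : Z.Normal) :
    ∃ M : Subgroup G, M.Normal ∧ M < Z ∧ IsChiefFactor Z M := by
  set s := {L : Subgroup G | L.Normal ∧ L < Z} with hs
  have hne : s.Nonempty := ⟨⊥, inferInstance, bot_lt_iff_ne_bot.mpr hZ⟩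
  obtain ⟨M, hMs, hmax⟩ := Set.Finite.exists_maximalFor id s (Set.toFinite s) hne
  refine ⟨M, hMs.1, hMs.2, hZn, hMs.1, hMs.2, ?_⟩
  intro L hL h1 h2
  by_cases hLZ : L = Z
  · right; exact hLZ
  · left
    exact le_antisymm (hmax ⟨hL, lt_of_le_of_ne h2 hLZ⟩ h1) h1

theorem fHypercentralIn_of_le {F : GroupClass} {Z M : Subgroup G}
    (hZ : FHypercentralIn F Z) (hMn : M.Normal) (hle : M ≤ Z) : FHypercentralIn F M :=
  ⟨hMn, fun U V hcf hU => hZ.2 U V hcf (hU.trans hle)⟩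

/-- **Core lemma**: a chief factor of a subgroup `H` of `G` lying below (the trace of) an
`F`-hypercentral normal subgroup of `G` is `F`-central in `H`. -/
theorem coreLemma (F : GroupClass) (hF : F.IsFormation) (hHer : F.Hereditary) :
    ∀ (n : ℕ) (Z : Subgroup G), Nat.card Z ≤ n → FHypercentralIn F Z →
    ∀ (H : Subgroup G) (U V : Subgroup ↥H) (hcf : IsChiefFactor U V),
      U.map H.subtype ≤ Z → @FCentralSection F ↥H _ _ U V hcf.1 hcf.2.1 := by
  intro n
  induction n with
  | zero =>
    intro Z hcard
    have := Nat.card_pos (α := ↥Z)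
    omega
  | succ n ih =>
    intro Z hcard hZ H U V hcf hUZ
    haveI hUn := hcf.1
    haveI hVn := hcf.2.1
    haveI hZn := hZ.1
    by_cases hbot : Z = ⊥
    · refine fCentral_of_le F hF hHer U V ?_
      intro u hu
      have h1 : ((u : ↥H) : G) ∈ Z := hUZ ⟨u, hu, rfl⟩
      rw [hbot, Subgroup.mem_bot] at h1
      have h2 : (u : ↥H) = 1 := Subtype.ext h1
      rw [h2]
      exact V.one_mem
    · obtain ⟨M, hMn, hMlt, hchief⟩ := exists_maximal_normal_lt Z hbot hZ.1
      haveI := hMn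
      have hMhyp : FHypercentralIn F M := fHypercentralIn_of_le hZ hMn hMlt.le
      have hcardM : Nat.card M ≤ n := by
        have := subgroup_card_lt_of_lt hMlt; omega
      haveI hDn : (U ⊓ M.subgroupOf H).Normal :=
        @Subgroup.normal_inf_normal _ _ U (M.subgroupOf H) hUn (hMn.subgroupOf H)
      set D := U ⊓ M.subgroupOf H with hD
      haveI : (V ⊔ D).Normal := @Subgroup.sup_normal _ _ V D hVn hDn
      rcases hcf.2.2.2 (V ⊔ D) inferInstance le_sup_left
        (sup_le hcf.2.2.1.le inf_le_left) with hVD | hVD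
      · -- case D ≤ V
        have hDV : D ≤ V := le_trans le_sup_right hVD.le
        have hZM : @FCentralSection F G _ _ Z M hchief.1 hchief.2.1 :=
          hZ.2 Z M hchief le_rfl
        refine fCentral_transfer_sub F hF hHer H Z M U V
          (fun u => hUZ ⟨(u : ↥H), u.2, rfl⟩) ?_ hZM
        intro u hu hM
        exact hDV ⟨hu, Subgroup.mem_subgroupOf.mpr hM⟩
      · -- case V ⊔ D = U
        set s := {L : Subgroup ↥H | L.Normal ∧ L ≤ D ∧ V ⊔ L = U} with hsdef
        have hsne : D ∈ s := ⟨hDn, le_rfl, hVD⟩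
        obtain ⟨L, hLs, hmin⟩ := Set.Finite.exists_minimalFor id s (Set.toFinite s) ⟨D, hsne⟩
        haveI hLn := hLs.1
        haveI : (V ⊓ L).Normal := @Subgroup.normal_inf_normal _ _ V L hVn hLn
        have hLU : L ≤ U := le_trans hLs.2.1 inf_le_left
        have hchiefL : IsChiefFactor L (V ⊓ L) := by
          refine ⟨hLs.1, inferInstance, ?_, ?_⟩
          · refine lt_of_le_of_ne inf_le_right ?_
            intro heq
            have hLV : L ≤ V := heq ▸ inf_le_left
            have : U = V := by
              rw [← hLs.2.2, sup_eq_left.mpr hLV]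
            exact absurd this.symm (ne_of_lt hcf.2.2.1)
          · intro L₁ hL₁ h1 h2
            haveI := hL₁
            haveI : (V ⊔ L₁).Normal := @Subgroup.sup_normal _ _ V L₁ hVn hL₁
            rcases hcf.2.2.2 (V ⊔ L₁) inferInstance le_sup_left
              (sup_le hcf.2.2.1.le (le_trans h2 hLU)) with h | h
            · left
              have hL₁V : L₁ ≤ V := le_trans le_sup_right h.le
              exact le_antisymm (le_inf hL₁V h2) h1
            · right
              exact le_antisymm h2 (hmin ⟨hL₁, le_trans h2 hLs.2.1, h⟩ h2)
        have hLM : L.map H.subtype ≤ M := by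
          rintro x ⟨l, hl, rfl⟩
          exact Subgroup.mem_subgroupOf.mp (hLs.2.1 hl).2
        have hFL := ih M hcardM hMhyp H L (V ⊓ L) hchiefL hLM
        exact fCentral_transfer_sup F hF hHer U V L hLU (le_of_eq hLs.2.2.symm) hFL

end Aux6
section Aux7
open scoped Pointwise
variable {G : Type} [Group G] [Finite G]

/-- **Join lemma**: chief factors below a join of two hypercentral subgroups are F-central. -/
theorem joinLemma (F : GroupClass) (hF : F.IsFormation) (hHer : F.Hereditary)
    (Z₁ : Subgroup G) (hZ₁ : FHypercentralIn F Z₁) :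
    ∀ (n : ℕ) (Z₂ : Subgroup G), Nat.card Z₂ ≤ n → FHypercentralIn F Z₂ →
    ∀ (U V : Subgroup G) (hcf : IsChiefFactor U V), U ≤ Z₁ ⊔ Z₂ →
      @FCentralSection F G _ _ U V hcf.1 hcf.2.1 := by
  haveI hZ₁n := hZ₁.1
  intro n
  induction n with
  | zero =>
    intro Z₂ hcard
    have := Nat.card_pos (α := ↥Z₂)
    omega
  | succ n ih =>
    intro Z₂ hcard hZ₂ U V hcf hUZ
    haveI hUn := hcf.1
    haveI hVn := hcf.2.1
    haveI hZ₂n := hZ₂.1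
    by_cases hbot : Z₂ = ⊥
    · refine hZ₁.2 U V hcf ?_
      rw [hbot, sup_bot_eq] at hUZ
      exact hUZ
    · obtain ⟨M₂, hM₂n, hM₂lt, hchief₂⟩ := exists_maximal_normal_lt Z₂ hbot hZ₂.1
      haveI := hM₂n
      have hM₂hyp : FHypercentralIn F M₂ := fHypercentralIn_of_le hZ₂ hM₂n hM₂lt.le
      have hcardM : Nat.card M₂ ≤ n := by
        have := subgroup_card_lt_of_lt hM₂lt; omega
      haveI : (Z₁ ⊔ M₂).Normal := @Subgroup.sup_normal _ _ Z₁ M₂ hZ₁n hM₂n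
      haveI hDn : (U ⊓ (Z₁ ⊔ M₂)).Normal :=
        @Subgroup.normal_inf_normal _ _ U (Z₁ ⊔ M₂) hUn inferInstance
      set D := U ⊓ (Z₁ ⊔ M₂) with hD
      haveI : (V ⊔ D).Normal := @Subgroup.sup_normal _ _ V D hVn hDn
      rcases hcf.2.2.2 (V ⊔ D) inferInstance le_sup_left
        (sup_le hcf.2.2.1.le inf_le_left) with hVD | hVD
      · -- case D ≤ V
        have hDV : D ≤ V := le_trans le_sup_right hVD.le
        -- first: Z₂ ≤ U ⊔ (Z₁ ⊔ M₂)
        haveI : (U ⊔ (Z₁ ⊔ M₂)).Normal := @Subgroup.sup_normal _ _ U (Z₁ ⊔ M₂) hUn inferInstance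
        haveI : ((U ⊔ (Z₁ ⊔ M₂)) ⊓ Z₂).Normal :=
          @Subgroup.normal_inf_normal _ _ (U ⊔ (Z₁ ⊔ M₂)) Z₂ inferInstance hZ₂n
        have hZ₂le : Z₂ ≤ U ⊔ (Z₁ ⊔ M₂) := by
          rcases hchief₂.2.2.2 ((U ⊔ (Z₁ ⊔ M₂)) ⊓ Z₂) inferInstance
            (le_inf (le_trans le_sup_right le_sup_right) hM₂lt.le) inf_le_right with hU₂ | hU₂
          · exfalso
            have hUle : U ≤ Z₁ ⊔ M₂ := by
              intro u hu
              have hu2 : u ∈ (Z₁ : Set G) * (Z₂ : Set G) := by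
                rw [← Subgroup.normal_mul]
                exact hUZ hu
              obtain ⟨z₁, hz₁, z₂, hz₂, rfl⟩ := hu2
              have hz₁' : z₁ ∈ U ⊔ (Z₁ ⊔ M₂) :=
                ((le_sup_left : Z₁ ≤ Z₁ ⊔ M₂).trans
                  (le_sup_right : Z₁ ⊔ M₂ ≤ U ⊔ (Z₁ ⊔ M₂))) hz₁
              have hzu : z₂ ∈ (U ⊔ (Z₁ ⊔ M₂)) ⊓ Z₂ := by
                constructor
                · have he : z₂ = z₁⁻¹ * (z₁ * z₂) := by group
                  rw [he]
                  exact Subgroup.mul_mem _ (Subgroup.inv_mem _ hz₁')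
                    ((le_sup_left : U ≤ U ⊔ (Z₁ ⊔ M₂)) hu)
                · exact hz₂
              have hz₂M : z₂ ∈ M₂ := by rw [← hU₂]; exact hzu
              exact Subgroup.mul_mem _ ((le_sup_left : Z₁ ≤ Z₁ ⊔ M₂) hz₁)
                ((le_sup_right : M₂ ≤ Z₁ ⊔ M₂) hz₂M)
            have hUV : U ≤ V := fun u hu => hDV ⟨hu, hUle hu⟩
            exact absurd (le_antisymm hUV hcf.2.2.1.le) (ne_of_lt hcf.2.2.1).symm
          · rw [← hU₂]
            exact inf_le_left
        set W := V ⊔ (Z₁ ⊔ M₂) with hW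
        haveI : W.Normal := @Subgroup.sup_normal _ _ V (Z₁ ⊔ M₂) hVn inferInstance
        set P := U ⊔ W with hP
        haveI : P.Normal := @Subgroup.sup_normal _ _ U W hUn inferInstance
        have h1 : @FCentralSection F G _ _ Z₂ M₂ hchief₂.1 hchief₂.2.1 :=
          hZ₂.2 Z₂ M₂ hchief₂ le_rfl
        have h2 : FCentralSection F P W := by
          refine fCentral_transfer_zigzag F hF hHer Z₂ M₂ P W ?_ ?_ ?_ h1
          · exact le_trans hZ₂le (sup_le le_sup_left (le_trans le_sup_right le_sup_right))
          · exact le_trans le_sup_right le_sup_right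
          · refine sup_le ?_ le_sup_right
            refine le_trans hUZ (sup_le ?_ le_sup_left)
            exact le_trans (le_trans le_sup_left le_sup_right) le_sup_right
        refine fCentral_transfer_down F hF hHer P W U V le_sup_left ?_ h2
        -- U ⊓ W ≤ V
        rintro x ⟨hxU, hxW⟩
        have hx2 : x ∈ (V : Set G) * ((Z₁ ⊔ M₂ : Subgroup G) : Set G) := by
          rw [← Subgroup.mul_normal]
          exact hxW
        obtain ⟨v, hv, y, hy, rfl⟩ := hx2
        have hyU : y ∈ U := by
          have : y = v⁻¹ * (v * y) := by group
          rw [this]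
          exact U.mul_mem (U.inv_mem (hcf.2.2.1.le hv)) hxU
        exact V.mul_mem hv (hDV ⟨hyU, hy⟩)
      · -- case V ⊔ D = U : minimal L trick
        set s := {L : Subgroup G | L.Normal ∧ L ≤ D ∧ V ⊔ L = U} with hsdef
        have hsne : D ∈ s := ⟨hDn, le_rfl, hVD⟩
        obtain ⟨L, hLs, hmin⟩ := Set.Finite.exists_minimalFor id s (Set.toFinite s) ⟨D, hsne⟩
        haveI hLn := hLs.1
        haveI : (V ⊓ L).Normal := @Subgroup.normal_inf_normal _ _ V L hVn hLn
        have hLU : L ≤ U := le_trans hLs.2.1 inf_le_left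
        have hchiefL : IsChiefFactor L (V ⊓ L) := by
          refine ⟨hLs.1, inferInstance, ?_, ?_⟩
          · refine lt_of_le_of_ne inf_le_right ?_
            intro heq
            have hLV : L ≤ V := heq ▸ inf_le_left
            have : U = V := by
              rw [← hLs.2.2, sup_eq_left.mpr hLV]
            exact absurd this.symm (ne_of_lt hcf.2.2.1)
          · intro L₁ hL₁ h1 h2
            haveI := hL₁
            haveI : (V ⊔ L₁).Normal := @Subgroup.sup_normal _ _ V L₁ hVn hL₁
            rcases hcf.2.2.2 (V ⊔ L₁) inferInstance le_sup_left
              (sup_le hcf.2.2.1.le (le_trans h2 hLU)) with h | h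
            · left
              have hL₁V : L₁ ≤ V := le_trans le_sup_right h.le
              exact le_antisymm (le_inf hL₁V h2) h1
            · right
              exact le_antisymm h2 (hmin ⟨hL₁, le_trans h2 hLs.2.1, h⟩ h2)
        have hFL := ih M₂ hcardM hM₂hyp L (V ⊓ L) hchiefL
          (le_trans hLs.2.1 inf_le_right)
        exact fCentral_transfer_sup F hF hHer U V L hLU (le_of_eq hLs.2.2.symm) hFL

end Aux7
section Aux8
variable {G : Type} [Group G] [Finite G]

theorem fHypercentralIn_sup (F : GroupClass) (hF : F.IsFormation) (hHer : F.Hereditary)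
    {N M : Subgroup G} (hN : FHypercentralIn F N) (hM : FHypercentralIn F M) :
    FHypercentralIn F (N ⊔ M) := by
  haveI := hN.1
  haveI := hM.1
  refine ⟨@Subgroup.sup_normal _ _ N M hN.1 hM.1, ?_⟩
  intro U V hcf hle
  exact joinLemma F hF hHer N hN (Nat.card M) M le_rfl hM U V hcf hle

theorem fHypercentre_hypercentral (F : GroupClass) (hF : F.IsFormation) (hHer : F.Hereditary) :
    FHypercentralIn F (FHypercentre F G) := by
  set s := {N : Subgroup G | FHypercentralIn F N} with hs
  have hbot : (⊥ : Subgroup G) ∈ s := by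
    refine ⟨inferInstance, ?_⟩
    intro U V hcf hle
    have : U = ⊥ := le_bot_iff.mp hle
    exact absurd (this ▸ hcf.2.2.1) (not_lt_bot)
  obtain ⟨Nmax, hNs, hmax⟩ := Set.Finite.exists_maximalFor id s (Set.toFinite s) ⟨⊥, hbot⟩
  have hgreatest : ∀ N ∈ s, N ≤ Nmax := by
    intro N hNmem
    have hsup : N ⊔ Nmax ∈ s := fHypercentralIn_sup F hF hHer hNmem hNs
    have := le_antisymm le_sup_right (hmax hsup le_sup_right)
    calc N ≤ N ⊔ Nmax := le_sup_left
    _ = Nmax := (this : Nmax = N ⊔ Nmax).symm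
  have heq : FHypercentre F G = Nmax := by
    refine le_antisymm ?_ ?_
    · exact iSup₂_le fun N hNmem => hgreatest N hNmem
    · exact le_iSup₂ (f := fun (N : Subgroup G) (_ : FHypercentralIn F N) => N) Nmax hNs
  rw [heq]
  exact hNs

theorem fHypercentralIn_subgroupOf (F : GroupClass) (hF : F.IsFormation) (hHer : F.Hereditary)
    (Z : Subgroup G) (hZ : FHypercentralIn F Z) (H : Subgroup G) :
    FHypercentralIn F (Z.subgroupOf H) := by
  refine ⟨hZ.1.subgroupOf H, ?_⟩
  intro U V hcf hle
  exact coreLemma F hF hHer (Nat.card Z) Z le_rfl hZ H U V hcf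
    (Subgroup.map_le_iff_le_comap.mpr hle)

end Aux8

/-- **Lemma 4(iii).** Let `𝔉` be a hereditary formation and `A`, `B` subgroups of the
finite group `G`. Then `Z_𝔉(B) ∩ A ≤ Z_𝔉(B ∩ A)`. -/
theorem FHypercentre_inf_le
    (F : GroupClass) (hF : F.IsFormation) (hHer : F.Hereditary)
    {G : Type} [Group G] [Finite G] (A B : Subgroup G) :
    (FHypercentre F ↥B).map B.subtype ⊓ A ≤
      (FHypercentre F ↥(B ⊓ A)).map (B ⊓ A).subtype := by
  rintro x ⟨hx1, hx2⟩
  obtain ⟨b, hb, rfl⟩ := hx1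
  have hyp : FHypercentralIn F (FHypercentre F ↥B) := fHypercentre_hypercentral F hF hHer
  set H' := (B ⊓ A).subgroupOf B with hH'
  have h1 : FHypercentralIn F ((FHypercentre F ↥B).subgroupOf H') :=
    fHypercentralIn_subgroupOf F hF hHer _ hyp H'
  let e : ↥H' ≃* ↥(B ⊓ A) := Subgroup.subgroupOfEquivOfLe inf_le_left
  have h2 : FHypercentralIn F (((FHypercentre F ↥B).subgroupOf H').map e.toMonoidHom) :=
    fHypercentralIn_map_equiv F hF hHer e _ h1
  have h3 : (((FHypercentre F ↥B).subgroupOf H').map e.toMonoidHom) ≤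
      FHypercentre F ↥(B ⊓ A) :=
    le_iSup₂ (f := fun (N : Subgroup ↥(B ⊓ A)) (_ : FHypercentralIn F N) => N) _ h2
  have hbH' : b ∈ H' := Subgroup.mem_subgroupOf.mpr ⟨b.2, hx2⟩
  have hy : (⟨b, hbH'⟩ : ↥H') ∈ (FHypercentre F ↥B).subgroupOf H' :=
    Subgroup.mem_subgroupOf.mpr hb
  refine ⟨e ⟨b, hbH'⟩, h3 ⟨⟨b, hbH'⟩, hy, rfl⟩, rfl⟩
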